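/- Let q : [0,π] → ℝ be continuous, let μ, ν ∈ ℝ, let γ, δ ∈ ℝ, and let y, z : [0,π] → ℝ be twice continuously differentiable functions, strictly positive on the open interval (0,π), satisfying −y''(x) + q(x)·y(x) = μ·y(x) and −z''(x) = ν·z(x) for all x ∈ [0,π], and both satisfying the boundary conditions w(0)·cos γ + w'(0)·sin γ = 0 and w(π)·cos δ + w'(π)·sin δ = 0. Then min_{x ∈ [0,π]} q(x) ≤ μ − ν ≤ max_{x ∈ [0,π]} q(x). -/

import Mathlib

open Real

lemma wronsk_zero (γ a b c d : ℝ) (h1 : a * Real.cos γ + b * Real.sin γ = 0)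
    (h2 : c * Real.cos γ + d * Real.sin γ = 0) : b * c - a * d = 0 := by
  have hs := Real.sin_sq_add_cos_sq γ
  linear_combination (a * d - b * c) * hs + Real.sin γ * (c * h1 - a * h2) +
    Real.cos γ * (b * h2 - d * h1)

/-- Theorem 3.1: the lowest eigenvalue of the Sturm–Liouville problem satisfies
min q ≤ μ₀(q,γ,δ) − μ₀(0,γ,δ) ≤ max q. -/
theorem stmt_7 (q : ℝ → ℝ) (hq : Continuous q)
    (μ ν γ δ : ℝ) (y z : ℝ → ℝ)
    (hy : ContDiff ℝ 2 y) (hz : ContDiff ℝ 2 z)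
    (hypos : ∀ x ∈ Set.Ioo (0:ℝ) Real.pi, 0 < y x)
    (hzpos : ∀ x ∈ Set.Ioo (0:ℝ) Real.pi, 0 < z x)
    (hyode : ∀ x ∈ Set.Icc (0:ℝ) Real.pi,
        -(deriv (deriv y) x) + q x * y x = μ * y x)
    (hzode : ∀ x ∈ Set.Icc (0:ℝ) Real.pi, -(deriv (deriv z) x) = ν * z x)
    (hybc0 : y 0 * Real.cos γ + deriv y 0 * Real.sin γ = 0)
    (hybc1 : y Real.pi * Real.cos δ + deriv y Real.pi * Real.sin δ = 0)
    (hzbc0 : z 0 * Real.cos γ + deriv z 0 * Real.sin γ = 0)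
    (hzbc1 : z Real.pi * Real.cos δ + deriv z Real.pi * Real.sin δ = 0)
    (m M : ℝ) (hm : IsLeast (q '' Set.Icc (0:ℝ) Real.pi) m)
    (hM : IsGreatest (q '' Set.Icc (0:ℝ) Real.pi) M) :
    m ≤ μ - ν ∧ μ - ν ≤ M := by
  have hy1 : ContDiff ℝ 1 (deriv y) := (contDiff_succ_iff_deriv.mp
    (by exact_mod_cast hy : ContDiff ℝ ((1:ℕ) + 1) y)).2.2
  have hz1 : ContDiff ℝ 1 (deriv z) := (contDiff_succ_iff_deriv.mp
    (by exact_mod_cast hz : ContDiff ℝ ((1:ℕ) + 1) z)).2.2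
  have hy' : ∀ x : ℝ, HasDerivAt y (deriv y x) x := fun x =>
    ((hy.differentiable (by norm_num)) x).hasDerivAt
  have hz' : ∀ x : ℝ, HasDerivAt z (deriv z x) x := fun x =>
    ((hz.differentiable (by norm_num)) x).hasDerivAt
  have hy'' : ∀ x : ℝ, HasDerivAt (deriv y) (deriv (deriv y) x) x := fun x =>
    ((hy1.differentiable one_ne_zero) x).hasDerivAt
  have hz'' : ∀ x : ℝ, HasDerivAt (deriv z) (deriv (deriv z) x) x := fun x =>
    ((hz1.differentiable one_ne_zero) x).hasDerivAt
  set W : ℝ → ℝ := fun x => deriv y x * z x - y x * deriv z x with hW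
  set F : ℝ → ℝ := fun x => (q x - (μ - ν)) * (y x * z x) with hF
  have hFc : Continuous F := by
    apply Continuous.mul
    · exact hq.sub continuous_const
    · exact hy.continuous.mul hz.continuous
  have hWd : ∀ x ∈ Set.uIcc (0:ℝ) Real.pi, HasDerivAt W (F x) x := by
    intro x hx
    rw [Set.uIcc_of_le Real.pi_pos.le] at hx
    have h1 : HasDerivAt W (deriv (deriv y) x * z x + deriv y x * deriv z x -
        (deriv y x * deriv z x + y x * deriv (deriv z) x)) x :=
      ((hy'' x).mul (hz' x)).sub ((hy' x).mul (hz'' x))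
    have e1 : deriv (deriv y) x = (q x - μ) * y x := by
      have := hyode x hx; linarith
    have e2 : deriv (deriv z) x = -(ν * z x) := by
      have := hzode x hx; linarith
    convert h1 using 1
    rw [e1, e2]; ring
  have hFi : IntervalIntegrable F MeasureTheory.volume 0 Real.pi :=
    hFc.intervalIntegrable 0 Real.pi
  have hint : ∫ x in (0:ℝ)..Real.pi, F x = W Real.pi - W 0 :=
    intervalIntegral.integral_eq_sub_of_hasDerivAt hWd hFi
  have hW0 : W 0 = 0 := by
    simpa using wronsk_zero γ (y 0) (deriv y 0) (z 0) (deriv z 0) hybc0 hzbc0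
  have hWpi : W Real.pi = 0 := by
    simpa using wronsk_zero δ (y Real.pi) (deriv y Real.pi) (z Real.pi)
      (deriv z Real.pi) hybc1 hzbc1
  have hzero : ∫ x in (0:ℝ)..Real.pi, F x = 0 := by rw [hint, hW0, hWpi]; ring
  constructor
  · by_contra h
    push_neg at h
    have hpos : ∀ x ∈ Set.Ioo (0:ℝ) Real.pi, 0 < F x := by
      intro x hx
      have hqx : m ≤ q x := hm.2 ⟨x, Set.mem_Icc_of_Ioo hx, rfl⟩
      exact mul_pos (by simp [hF]; linarith) (mul_pos (hypos x hx) (hzpos x hx))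
    have := intervalIntegral.intervalIntegral_pos_of_pos_on hFi hpos Real.pi_pos
    rw [hzero] at this
    exact lt_irrefl 0 this
  · by_contra h
    push_neg at h
    have hpos : ∀ x ∈ Set.Ioo (0:ℝ) Real.pi, 0 < (μ - ν - q x) * (y x * z x) := by
      intro x hx
      have hqx : q x ≤ M := hM.2 ⟨x, Set.mem_Icc_of_Ioo hx, rfl⟩
      exact mul_pos (by linarith) (mul_pos (hypos x hx) (hzpos x hx))
    have this : 0 < ∫ x in (0:ℝ)..Real.pi, (μ - ν - q x) * (y x * z x) := intervalIntegral.intervalIntegral_pos_of_pos_on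
      (((continuous_const.sub hq).mul (hy.continuous.mul hz.continuous)).intervalIntegrable 0 Real.pi)
      hpos Real.pi_pos
    have hneg : (fun x => (μ - ν - q x) * (y x * z x)) = fun x => -F x := by
      funext x; simp [hF]; ring
    rw [hneg, intervalIntegral.integral_neg, hzero] at this
    simp at this
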